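/- Let V = ℂⁿ with standard basis e₁,...,eₙ, indices taken modulo n, let U = span(e₁,...,e_{n-1}), let ι : U → V the inclusion and π : V → U the projection along eₙ, and define B(e_i) = π ∘ J^i ∘ ι where J is the cyclic shift Je_i = e_{i+1}. Then for all u, v ∈ U, the commutator satisfies [B(u), B(v)](w) = (Σ_i w_{n-i} u_i) v − (Σ_j w_{n-j} v_j) u for all w ∈ U, where u = Σ u_i e_i etc. -/

import Mathlib

/-- Projection of `ℂⁿ` (with `n = m+1`) onto `U = span(e₁,…,e_{n-1})` along the last
basis vector `eₙ`: it kills the last coordinate. -/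
def cyclicProj (m : ℕ) (v : Fin (m + 1) → ℂ) : Fin (m + 1) → ℂ :=
  fun k => if k = Fin.last m then 0 else v k

/-- The map `B : U → End(U)` determined by `B(e_i) = π ∘ Jⁱ ∘ ι` for `1 ≤ i ≤ n−1`,
where `J` is the cyclic shift `J e_i = e_{i+1}` (indices mod `n`), `ι : U → ℂⁿ` the
inclusion and `π` the projection along `eₙ`.  Here indices are zero-based: the basis
vector `e_i` of the paper is the `(i-1)`-st coordinate vector, so
`(Jˢ v) k = v (k - s)` and `B(u)(w) = Σ_i u_i · π (J^{i+1} (ι w))` (the term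
`i = m` is irrelevant since `u ∈ U` has vanishing last coordinate). -/
noncomputable def cyclicB (m : ℕ) (u : Fin (m + 1) → ℂ) (w : Fin (m + 1) → ℂ) : Fin (m + 1) → ℂ :=
  cyclicProj m (fun k => ∑ i : Fin (m + 1), u i * cyclicProj m w (k - (i + 1)))

lemma cyclicProj_eq_self (m : ℕ) (w : Fin (m + 1) → ℂ) (hw : w (Fin.last m) = 0) :
    cyclicProj m w = w := by
  funext k
  simp only [cyclicProj]
  split <;> simp_all

lemma cyclicB_last (m : ℕ) (u w : Fin (m + 1) → ℂ) :
    cyclicB m u w (Fin.last m) = 0 := by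
  simp [cyclicB, cyclicProj]

lemma fin_last_eq_neg_one (m : ℕ) : (Fin.last m : Fin (m + 1)) = -1 :=
  eq_neg_of_add_eq_zero_left (Fin.last_add_one m)

lemma cyclicB_apply (m : ℕ) (b w : Fin (m + 1) → ℂ) (hw : w (Fin.last m) = 0)
    (t : Fin (m + 1)) :
    cyclicB m b w t =
      if t = Fin.last m then 0 else ∑ j : Fin (m + 1), b j * w (t - (j + 1)) := by
  have hPw : cyclicProj m w = w := cyclicProj_eq_self m w hw
  simp only [cyclicB, hPw]
  simp only [cyclicProj]

lemma cyclicB_comp (m : ℕ) (a b w : Fin (m + 1) → ℂ) (x : Fin (m + 1))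
    (hw : w (Fin.last m) = 0) :
    ∑ i : Fin (m + 1), a i * cyclicB m b w (x - (i + 1)) =
      (∑ i : Fin (m + 1), ∑ j : Fin (m + 1), a i * b j * w (x - (i + 1) - (j + 1)))
        - a x * ∑ j : Fin (m + 1), b j * w (-(j + 2)) := by
  have hcond : ∀ i : Fin (m + 1), (x - (i + 1) = Fin.last m) ↔ i = x := by
    intro i
    rw [fin_last_eq_neg_one, sub_eq_iff_eq_add]
    constructor
    · intro h
      have : i = -1 + (i + 1) := by open Fin.CommRing in ring
      rw [h, ← this]
    · intro h; rw [h]; open Fin.CommRing in ring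
  have step1 : ∀ i : Fin (m + 1),
      a i * cyclicB m b w (x - (i + 1)) =
        a i * (∑ j : Fin (m + 1), b j * w (x - (i + 1) - (j + 1)))
          - (if i = x then a i * ∑ j : Fin (m + 1), b j * w (x - (i + 1) - (j + 1)) else 0) := by
    intro i
    rw [cyclicB_apply m b w hw]
    simp only [hcond i]
    split <;> ring
  rw [Finset.sum_congr rfl fun i _ => step1 i, Finset.sum_sub_distrib,
    Finset.sum_ite_eq' Finset.univ x
      (fun i => a i * ∑ j : Fin (m + 1), b j * w (x - (i + 1) - (j + 1)))]
  simp only [Finset.mem_univ, if_true, Finset.mul_sum]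
  congr 1
  · exact Finset.sum_congr rfl fun i _ => Finset.sum_congr rfl fun j _ => by ring
  · refine Finset.sum_congr rfl fun j _ => ?_
    have : x - (x + 1) - (j + 1) = -(j + 2) := by open Fin.CommRing in ring
    rw [this]

/-- For `u, v, w ∈ U` one has
`[B(u),B(v)](w) = (Σ_i w_{n-i} u_i) v − (Σ_j w_{n-j} v_j) u`,
where `w_n = 0` by convention (in zero-based indices, `w_{n-i}` with `i = k+1`
becomes `w (-(k+2))` in `Fin n` arithmetic). -/
theorem cyclicB_commutator (m : ℕ) (u v w : Fin (m + 1) → ℂ)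
    (hu : u (Fin.last m) = 0) (hv : v (Fin.last m) = 0) (hw : w (Fin.last m) = 0) :
    cyclicB m u (cyclicB m v w) - cyclicB m v (cyclicB m u w) =
      (∑ k : Fin (m + 1), w (-(k + 2)) * u k) • v -
      (∑ k : Fin (m + 1), w (-(k + 2)) * v k) • u := by
  funext x
  by_cases hx : x = Fin.last m
  · subst hx
    simp [cyclicB_last, hu, hv]
  · have h1 : cyclicB m u (cyclicB m v w) x =
        ∑ i : Fin (m + 1), u i * cyclicB m v w (x - (i + 1)) := by
      rw [cyclicB_apply m u _ (cyclicB_last m v w), if_neg hx]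
    have h2 : cyclicB m v (cyclicB m u w) x =
        ∑ i : Fin (m + 1), v i * cyclicB m u w (x - (i + 1)) := by
      rw [cyclicB_apply m v _ (cyclicB_last m u w), if_neg hx]
    simp only [Pi.sub_apply, Pi.smul_apply, smul_eq_mul, h1, h2,
      cyclicB_comp m u v w x hw, cyclicB_comp m v u w x hw]
    have hsym :
        (∑ i : Fin (m + 1), ∑ j : Fin (m + 1), u i * v j * w (x - (i + 1) - (j + 1))) =
        (∑ i : Fin (m + 1), ∑ j : Fin (m + 1), v i * u j * w (x - (i + 1) - (j + 1))) := by
      rw [Finset.sum_comm]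
      refine Finset.sum_congr rfl fun i _ => Finset.sum_congr rfl fun j _ => ?_
      have : x - (j + 1) - (i + 1) = x - (i + 1) - (j + 1) := by open Fin.CommRing in ring
      rw [this]; ring
    rw [hsym]
    have hTu : (∑ k : Fin (m + 1), w (-(k + 2)) * u k) =
        ∑ j : Fin (m + 1), u j * w (-(j + 2)) :=
      Finset.sum_congr rfl fun j _ => by ring
    have hTv : (∑ k : Fin (m + 1), w (-(k + 2)) * v k) =
        ∑ j : Fin (m + 1), v j * w (-(j + 2)) :=
      Finset.sum_congr rfl fun j _ => by ring
    rw [hTu, hTv]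
    ring
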